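/- arXiv:1803.01299 — 2 statements merged into one kernel-verified Lean document; each statement's English description precedes it below -/
import Mathlib

section
/- Scalar version of the ternary update rule: for m ∈ ℝ, ρ > 0, λ ≥ 0, and a ∈ {−1, 0, +1}, the function g(θ) = θ·m − λθ² − ρ(θ − a)² on {−1, 0, +1} is maximized at θ* = +1 if m ≥ ρ(1 − 2a) + λ, at θ* = −1 if m ≤ −ρ(1 + 2a) − λ, and at θ* = 0 otherwise; i.e., g(θ*) ≥ g(θ) for all θ ∈ {−1, 0, +1}. -/
theorem scalar_ternary_update (m ρ lam a : ℝ) (hρ : 0 < ρ) (hlam : 0 ≤ lam)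
    (ha : a = -1 ∨ a = 0 ∨ a = 1)
    (g : ℝ → ℝ) (hg : ∀ θ, g θ = θ * m - lam * θ ^ 2 - ρ * (θ - a) ^ 2)
    (θstar : ℝ)
    (hθstar : θstar =
      if ρ * (1 - 2 * a) + lam ≤ m then 1
      else if m ≤ -(ρ * (1 + 2 * a)) - lam then -1
      else 0) :
    ∀ θ : ℝ, θ = -1 ∨ θ = 0 ∨ θ = 1 → g θ ≤ g θstar := by
  intro θ hθ
  simp only [hg]
  split_ifs at hθstar with h1 h2 <;> subst hθstar <;>
    rcases ha with ha | ha | ha <;> subst ha <;>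
    rcases hθ with hθ | hθ | hθ <;> subst hθ <;>
    (try push_neg at *) <;> nlinarith
end

section
/- Let f_t(x, θ) be differentiable in θ with dynamics x_{t+1} = f_t(x_t, θ_t), terminal loss J(θ) = (1/S) Σ_s Φ_s(x^θ_{s,T}), and co-states p^θ_{s,t} defined by p^θ_{s,T} = −(1/S)∇Φ_s(x^θ_{s,T}) and p^θ_{s,t} = (∇_x f_t(x^θ_{s,t}, θ_t))ᵀ p^θ_{s,t+1}. Then ∇_{θ_t} J(θ) = −∇_θ Σ_{s=1}^S H_t(x^θ_{s,t}, p^θ_{s,t+1}, θ_t), where H_t(x, p, θ) = ⟨p, f_t(x, θ)⟩. Consequently, gradient ascent on the per-layer Hamiltonians equals gradient descent with back-propagation on J. -/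
open Finset RealInnerProductSpace in
theorem msa_gradient_ascent_is_backprop (d m S T : ℕ) (hS : 0 < S) (hT : 0 < T)
    (f : ℕ → EuclideanSpace ℝ (Fin d) → EuclideanSpace ℝ (Fin m) →
      EuclideanSpace ℝ (Fin d))
    (hf : ∀ t, Differentiable ℝ
      (fun q : EuclideanSpace ℝ (Fin d) × EuclideanSpace ℝ (Fin m) => f t q.1 q.2))
    (Φ : Fin S → EuclideanSpace ℝ (Fin d) → ℝ)
    (hΦ : ∀ s, Differentiable ℝ (Φ s))
    (x0 : Fin S → EuclideanSpace ℝ (Fin d))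
    (x : Fin S → (ℕ → EuclideanSpace ℝ (Fin m)) → ℕ → EuclideanSpace ℝ (Fin d))
    (hx0 : ∀ s θ, x s θ 0 = x0 s)
    (hx : ∀ s θ t, x s θ (t + 1) = f t (x s θ t) (θ t))
    (p : Fin S → (ℕ → EuclideanSpace ℝ (Fin m)) → ℕ → EuclideanSpace ℝ (Fin d))
    (hpT : ∀ s θ, p s θ T = -(1 / (S : ℝ)) • gradient (Φ s) (x s θ T))
    (hp : ∀ s θ t, t < T → p s θ t =
      (fderiv ℝ (fun y => f t y (θ t)) (x s θ t)).adjoint (p s θ (t + 1)))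
    (J : (ℕ → EuclideanSpace ℝ (Fin m)) → ℝ)
    (hJ : ∀ θ, J θ = (1 / (S : ℝ)) * ∑ s, Φ s (x s θ T)) :
    ∀ (θ : ℕ → EuclideanSpace ℝ (Fin m)) (t : ℕ), t < T →
      gradient (fun φ => J (Function.update θ t φ)) (θ t) =
      - gradient (fun φ => ∑ s, ⟪p s θ (t + 1), f t (x s θ t) φ⟫) (θ t) := by
  intro θ t ht
  let E := EuclideanSpace ℝ (Fin d)
  let M := EuclideanSpace ℝ (Fin m)
  have hd1 : ∀ t' (ψ : M), Differentiable ℝ (fun y : E => f t' y ψ) := by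
    intro t' ψ
    have := (hf t').comp ((differentiable_id (𝕜 := ℝ) (E := E)).prodMk (differentiable_const ψ))
    exact this
  have hd2 : ∀ t' (y : E), Differentiable ℝ (fun ψ : M => f t' y ψ) := by
    intro t' y
    have := (hf t').comp ((differentiable_const (𝕜 := ℝ) (E := M) y).prodMk differentiable_id)
    exact this
  have hupd : Function.update θ t (θ t) = θ := Function.update_eq_self t θ
  -- invariance below time t
  have hinv : ∀ (φ : M) s t', t' ≤ t → x s (Function.update θ t φ) t' = x s θ t' := by
    intro φ s t' ht'
    induction t' with
    | zero => rw [hx0, hx0]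
    | succ n ih =>
      rw [hx, hx, ih (by omega), Function.update_of_ne (by omega)]
  -- chain of linearized dynamics from time t+1
  set B : Fin S → ℕ → (E →L[ℝ] E) := fun s k =>
    Nat.rec (ContinuousLinearMap.id ℝ E)
      (fun k Bk => (fderiv ℝ (fun y => f (t+1+k) y (θ (t+1+k))) (x s θ (t+1+k))).comp Bk) k
    with hB
  set D0 : Fin S → (M →L[ℝ] E) := fun s =>
    fderiv ℝ (fun φ => f t (x s θ t) φ) (θ t) with hD0
  -- forward derivative lemma
  have hfwd : ∀ s k, HasFDerivAt (fun φ => x s (Function.update θ t φ) (t+1+k))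
      ((B s k).comp (D0 s)) (θ t) := by
    intro s k
    induction k with
    | zero =>
      have heq : (fun φ : M => x s (Function.update θ t φ) (t+1)) =
          fun φ => f t (x s θ t) φ := by
        funext φ
        rw [hx, hinv φ s t le_rfl, Function.update_self]
      rw [heq, hB]
      simpa using ((hd2 t (x s θ t)) (θ t)).hasFDerivAt
    | succ k ih =>
      have heq : (fun φ : M => x s (Function.update θ t φ) (t+1+(k+1))) =
          (fun y => f (t+1+k) y (θ (t+1+k))) ∘
            (fun φ => x s (Function.update θ t φ) (t+1+k)) := by
        funext φ
        show x s (Function.update θ t φ) (t+1+k+1) = _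
        rw [hx, Function.update_of_ne (by omega)]
        rfl
      rw [heq]
      have hpt : x s (Function.update θ t (θ t)) (t+1+k) = x s θ (t+1+k) := by rw [hupd]
      have houter : HasFDerivAt (fun y => f (t+1+k) y (θ (t+1+k)))
          (fderiv ℝ (fun y => f (t+1+k) y (θ (t+1+k))) (x s θ (t+1+k)))
          ((fun φ => x s (Function.update θ t φ) (t+1+k)) (θ t)) := by
        beta_reduce
        rw [hupd]
        exact ((hd1 (t+1+k) (θ (t+1+k))) (x s θ (t+1+k))).hasFDerivAt
      exact (houter.comp (θ t) ih).congr_fderiv (by rw [ContinuousLinearMap.comp_assoc])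
  -- adjoint chain lemma
  have hadj : ∀ s k, t+1+k ≤ T → p s θ (t+1) = (B s k).adjoint (p s θ (t+1+k)) := by
    intro s k
    induction k with
    | zero => intro _; simp [hB, ContinuousLinearMap.adjoint_id]
    | succ k ih =>
      intro hk
      have hlt : t+1+k < T := by omega
      rw [ih (by omega), hp s θ (t+1+k) hlt]
      show _ = ((fderiv ℝ (fun y => f (t+1+k) y (θ (t+1+k))) (x s θ (t+1+k))).comp
        (B s k)).adjoint (p s θ (t+1+k+1))
      rw [ContinuousLinearMap.adjoint_comp]
      rfl
  set K := T - (t+1) with hK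
  have hTK : t+1+K = T := by omega
  -- LHS HasFDerivAt
  have hLs : ∀ s : Fin S, HasFDerivAt (fun φ => Φ s (x s (Function.update θ t φ) T))
      ((fderiv ℝ (Φ s) (x s θ T)).comp ((B s K).comp (D0 s))) (θ t) := by
    intro s
    have hΦd : HasFDerivAt (Φ s) (fderiv ℝ (Φ s) (x s θ T))
        ((fun φ => x s (Function.update θ t φ) (t+1+K)) (θ t)) := by
      beta_reduce
      rw [hupd, hTK]
      exact ((hΦ s) (x s θ T)).hasFDerivAt
    have h2 := hΦd.comp (θ t) (hfwd s K)
    have heq : (fun φ : M => Φ s (x s (Function.update θ t φ) T)) =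
        Φ s ∘ fun φ => x s (Function.update θ t φ) (t+1+K) := by
      funext φ; rw [hTK]; rfl
    rw [heq]
    exact h2
  have hL : HasFDerivAt (fun φ => J (Function.update θ t φ))
      ((1 / (S:ℝ)) • ∑ s, (fderiv ℝ (Φ s) (x s θ T)).comp ((B s K).comp (D0 s))) (θ t) := by
    have heq : (fun φ : M => J (Function.update θ t φ)) =
        fun φ => (1 / (S:ℝ)) * ∑ s, Φ s (x s (Function.update θ t φ) T) := by
      funext φ; rw [hJ]
    rw [heq]
    have hsum := HasFDerivAt.sum (u := Finset.univ) (fun s _ => hLs s)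
    have := hsum.const_mul ((1 / (S:ℝ)))
    simpa using this
  -- RHS HasFDerivAt
  have hRs : ∀ s : Fin S, HasFDerivAt
      (fun φ => (⟪p s θ (t+1), f t (x s θ t) φ⟫ : ℝ))
      ((innerSL ℝ (p s θ (t+1))).comp (D0 s)) (θ t) := by
    intro s
    have h1 : HasFDerivAt (fun φ : M => f t (x s θ t) φ) (D0 s) (θ t) :=
      ((hd2 t (x s θ t)) (θ t)).hasFDerivAt
    exact ((innerSL ℝ (p s θ (t+1))).hasFDerivAt.comp (θ t) h1)
  have hR : HasFDerivAt (fun φ => ∑ s, (⟪p s θ (t+1), f t (x s θ t) φ⟫ : ℝ))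
      (∑ s, (innerSL ℝ (p s θ (t+1))).comp (D0 s)) (θ t) :=
    HasFDerivAt.fun_sum (u := Finset.univ) (fun s _ => hRs s)
  -- derivative equality
  have hneg : ((1 / (S:ℝ)) • ∑ s, (fderiv ℝ (Φ s) (x s θ T)).comp ((B s K).comp (D0 s)))
      = -(∑ s : Fin S, (innerSL ℝ (p s θ (t+1))).comp (D0 s)) := by
    ext v
    simp only [ContinuousLinearMap.smul_apply, ContinuousLinearMap.sum_apply,
      ContinuousLinearMap.comp_apply, ContinuousLinearMap.neg_apply, innerSL_apply_apply,
      smul_eq_mul]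
    rw [Finset.mul_sum, ← Finset.sum_neg_distrib]
    congr 1
    funext s
    have hgrad : ∀ w : E, (⟪gradient (Φ s) (x s θ T), w⟫ : ℝ) = fderiv ℝ (Φ s) (x s θ T) w := by
      intro w
      simp only [gradient]
      exact InnerProductSpace.toDual_symm_apply
    rw [hadj s K hTK.le, ContinuousLinearMap.adjoint_inner_left, hTK, hpT s θ,
      real_inner_smul_left, hgrad]
    ring
  rw [hL.hasGradientAt.gradient, hR.hasGradientAt.gradient, hneg, map_neg]
end
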